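/- If G is a well-covered graph and S is an independent set of G with |S| < α(G), then the localization G_S = G − N_G[S] is well-covered and α(G) = α(G_S) + |S|. -/

import Mathlib

open Classical

noncomputable section

variable {V : Type*}

/-- `s` is an independent set of `G`. -/
def IndepSet (G : SimpleGraph V) (s : Set V) : Prop :=
  ∀ ⦃a⦄, a ∈ s → ∀ ⦃b⦄, b ∈ s → ¬ G.Adj a b

/-- The independence number `α(G)`. -/
def alphaNum [Fintype V] (G : SimpleGraph V) : ℕ :=
  sSup {n | ∃ s : Set V, IndepSet G s ∧ s.ncard = n}

/-- `s` is a maximal independent set of `G`. -/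
def MaximalIndep (G : SimpleGraph V) (s : Set V) : Prop :=
  IndepSet G s ∧ ∀ t : Set V, IndepSet G t → s ⊆ t → s = t

/-- `G` is well-covered: all maximal independent sets have cardinality `α(G)`. -/
def WellCovered [Fintype V] (G : SimpleGraph V) : Prop :=
  ∀ s : Set V, MaximalIndep G s → s.ncard = alphaNum G

/-- The open neighborhood `N_G(S)` of a set of vertices. -/
def openNbhd (G : SimpleGraph V) (S : Set V) : Set V :=
  {v | v ∉ S ∧ ∃ u ∈ S, G.Adj u v}

/-- The closed neighborhood `N_G[S]`. -/
def closedNbhd (G : SimpleGraph V) (S : Set V) : Set V :=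
  S ∪ openNbhd G S

/-- The vertex set of the localization `G_S = G - N_G[S]`. -/
def localSet (G : SimpleGraph V) (S : Set V) : Set V :=
  (closedNbhd G S)ᶜ

/-- `G` belongs to the class `W_p`. -/
def Wp (p : ℕ) [Fintype V] (G : SimpleGraph V) : Prop :=
  p ≤ Fintype.card V ∧
    ∀ A : Fin p → Set V,
      (∀ i, IndepSet G (A i)) →
      (∀ i j, i ≠ j → Disjoint (A i) (A j)) →
      ∃ S : Fin p → Set V,
        (∀ i j, i ≠ j → Disjoint (S i) (S j)) ∧
        (∀ i, IndepSet G (S i) ∧ (S i).ncard = alphaNum G) ∧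
        (∀ i, A i ⊆ S i)

/-- `G` is `α`-critical: deleting any edge increases the independence number. -/
def AlphaCritical [Fintype V] (G : SimpleGraph V) : Prop :=
  ∀ a b : V, G.Adj a b → alphaNum G < alphaNum (G.deleteEdges {s(a, b)})

/-- The vertex set of `G_{ab} = G - (N_G(a) ∪ N_G(b))`. -/
def edgeLocalSet (G : SimpleGraph V) (a b : V) : Set V :=
  (G.neighborSet a ∪ G.neighborSet b)ᶜ

lemma alpha_bddAbove [Fintype V] (G : SimpleGraph V) :
    BddAbove {n | ∃ s : Set V, IndepSet G s ∧ s.ncard = n} := by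
  refine ⟨Fintype.card V, ?_⟩
  rintro n ⟨s, _, rfl⟩
  simpa [Set.ncard_univ] using Set.ncard_le_ncard (Set.subset_univ s) Set.finite_univ

lemma indep_ncard_le_alpha [Fintype V] (G : SimpleGraph V) {s : Set V}
    (hs : IndepSet G s) : s.ncard ≤ alphaNum G :=
  le_csSup (alpha_bddAbove G) ⟨s, hs, rfl⟩

lemma exists_maximal_extension [Fintype V] (G : SimpleGraph V) {s : Set V}
    (hs : IndepSet G s) : ∃ t, MaximalIndep G t ∧ s ⊆ t := by
  set A : Set ℕ := {n | ∃ t : Set V, IndepSet G t ∧ s ⊆ t ∧ t.ncard = n} with hA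
  have hne : A.Nonempty := ⟨s.ncard, s, hs, subset_rfl, rfl⟩
  have hbdd : BddAbove A := by
    refine ⟨Fintype.card V, ?_⟩
    rintro n ⟨t, _, _, rfl⟩
    simpa [Set.ncard_univ] using Set.ncard_le_ncard (Set.subset_univ t) Set.finite_univ
  obtain ⟨t, ht, hst, htc⟩ := Nat.sSup_mem hne hbdd
  refine ⟨t, ⟨ht, ?_⟩, hst⟩
  intro u hu htu
  by_contra hne'
  have hlt : t.ncard < u.ncard :=
    Set.ncard_lt_ncard (ssubset_of_subset_of_ne htu hne') (Set.toFinite u)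
  have : u.ncard ≤ sSup A := le_csSup hbdd ⟨u, hu, hst.trans htu, rfl⟩
  omega

theorem stmt6 [Fintype V] (G : SimpleGraph V) (S : Set V)
    (hwc : WellCovered G) (hS : IndepSet G S) (hcard : S.ncard < alphaNum G) :
    WellCovered (G.induce (localSet G S)) ∧
      alphaNum G = alphaNum (G.induce (localSet G S)) + S.ncard := by
  classical
  set L := localSet G S with hLdef
  set H := G.induce L with hHdef
  -- membership facts for L
  have hLnotS : ∀ x : L, (x : V) ∉ S := fun x hx => x.2 (Or.inl hx)
  have hLnotN : ∀ x : L, ∀ s ∈ S, ¬ G.Adj s (x : V) := by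
    intro x s hs hadj
    exact x.2 (Or.inr ⟨hLnotS x, s, hs, hadj⟩)
  -- key: every maximal independent set of H has ncard + S.ncard = alphaNum G
  have key : ∀ T : Set L, MaximalIndep H T → T.ncard + S.ncard = alphaNum G := by
    intro T hT
    set U : Set V := S ∪ (Subtype.val '' T) with hUdef
    have hdisj : Disjoint S (Subtype.val '' T) := by
      rw [Set.disjoint_right]
      rintro x ⟨y, _, rfl⟩
      exact hLnotS y
    have hUind : IndepSet G U := by
      rintro a (ha | ⟨a', ha', rfl⟩) b (hb | ⟨b', hb', rfl⟩) hadj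
      · exact hS ha hb hadj
      · exact hLnotN b' a ha hadj
      · exact hLnotN a' b hb hadj.symm
      · by_cases hab : a' = b'
        · subst hab; exact G.loopless.irrefl _ hadj
        · exact hT.1 ha' hb' (by simpa [hHdef] using hadj)
    have hUmax : MaximalIndep G U := by
      refine ⟨hUind, fun t ht hUt => ?_⟩
      refine Set.Subset.antisymm hUt fun x hx => ?_
      by_contra hxU
      have hxS : x ∉ S := fun h => hxU (Or.inl h)
      have hxL : x ∈ L := by
        intro hxc
        rcases hxc with h | ⟨_, s, hs, hadj⟩
        · exact hxS h
        · exact ht (hUt (Or.inl hs)) hx hadj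
      set T' : Set L := insert ⟨x, hxL⟩ T with hT'def
      have hT'ind : IndepSet H T' := by
        have hmem : ∀ a : L, a ∈ T' → (a : V) ∈ t := by
          rintro a (rfl | ha)
          · exact hx
          · exact hUt (Or.inr ⟨a, ha, rfl⟩)
        intro a ha b hb hadj
        exact ht (hmem a ha) (hmem b hb) (by simpa [hHdef] using hadj)
      have := hT.2 T' hT'ind (Set.subset_insert _ _)
      have : (⟨x, hxL⟩ : L) ∈ T := this ▸ Set.mem_insert _ _
      exact hxU (Or.inr ⟨⟨x, hxL⟩, this, rfl⟩)
    have hUc : U.ncard = alphaNum G := hwc U hUmax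
    have himg : (Subtype.val '' T).ncard = T.ncard :=
      Set.ncard_image_of_injective T Subtype.val_injective
    rw [← hUc, hUdef, Set.ncard_union_eq hdisj (Set.toFinite _) (Set.toFinite _), himg,
      Nat.add_comm]
  -- a maximal independent set of H
  obtain ⟨T0, hT0, -⟩ := exists_maximal_extension H (s := ∅) (by intro a ha; exact absurd ha (Set.notMem_empty a))
  have halphaH : alphaNum H = T0.ncard := by
    apply le_antisymm
    · refine csSup_le ⟨0, ∅, fun a ha => absurd ha (Set.notMem_empty a), by simp⟩ ?_
      rintro n ⟨T, hTind, rfl⟩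
      obtain ⟨T', hT', hTT'⟩ := exists_maximal_extension H hTind
      have h1 := key T' hT'
      have h2 := key T0 hT0
      have := Set.ncard_le_ncard hTT' (Set.toFinite T')
      omega
    · exact le_csSup (alpha_bddAbove H) ⟨T0, hT0.1, rfl⟩
  have hkey0 := key T0 hT0
  constructor
  · intro T hT
    have := key T hT
    omega
  · omega
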